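/- Let (X, X') be an exchangeable pair and W = W(X), W' = W(X') be integer-valued. For m ∈ ℤ define Q_m(x) = P(W' = W + m | X = x) and q_m = E Q_m(X). Then for every positive integer m with q_m > 0, D_{1,m}(ℒ(W)) ≤ (√Var Q_m(X) + √Var Q_{−m}(X)) / q_m. -/

import Mathlib

open MeasureTheory ProbabilityTheory Filter

noncomputable section

/-- Forward difference operator with step `m`. -/
def fd (m : ℤ) (f : ℤ → ℝ) : ℤ → ℝ := fun j => f (j + m) - f j

/-- The smoothness functional `D_{n,m}` of a law `ν` on `ℤ`. -/
def Dnm (n m : ℕ) (ν : Measure ℤ) : ℝ :=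
  sSup {x | ∃ g : ℤ → ℝ, (∀ i, |g i| ≤ 1) ∧ x = |∫ i, (fd m)^[n] g i ∂ν|}

/-- Mean absolute deviation is at most the standard deviation. -/
theorem aux_absdev_le_sqrt_variance {Ω : Type*} [MeasurableSpace Ω] (μ : Measure Ω)
    [IsProbabilityMeasure μ] {Y : Ω → ℝ} (hY : MemLp Y 2 μ) {c : ℝ} (hc : c = ∫ ω, Y ω ∂μ) :
    ∫ ω, |Y ω - c| ∂μ ≤ Real.sqrt (variance Y μ) := by
  have hY2 : MemLp (fun ω => Y ω - c) 2 μ := hY.sub (memLp_const c)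
  have habs : MemLp (fun ω => |Y ω - c|) 2 μ := hY2.abs
  have hvar : variance Y μ = ∫ ω, (Y ω - c)^2 ∂μ := by
    rw [variance_eq_integral hY.aemeasurable, hc]
  have hcs := integral_mul_le_Lp_mul_Lq_of_nonneg (μ := μ) (p := 2) (q := 2)
    (f := fun ω => |Y ω - c|) (g := fun _ => (1:ℝ))
    (by constructor <;> norm_num)
    (Filter.Eventually.of_forall fun ω => abs_nonneg _)
    (Filter.Eventually.of_forall fun ω => zero_le_one)
    (by rw [ENNReal.ofReal_ofNat]; exact habs) (by rw [ENNReal.ofReal_ofNat]; exact memLp_const (1:ℝ))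
  simp only [mul_one] at hcs
  calc ∫ ω, |Y ω - c| ∂μ
      ≤ (∫ ω, |Y ω - c| ^ (2:ℝ) ∂μ) ^ ((1:ℝ)/2) * (∫ _ω, (1:ℝ)^(2:ℝ) ∂μ) ^ ((1:ℝ)/2) := hcs
    _ = Real.sqrt (variance Y μ) := by
        simp only [one_pow, integral_const, measure_univ, probReal_univ, ENNReal.toReal_one, smul_eq_mul,
          one_mul, Real.one_rpow, mul_one, Real.rpow_one]
        rw [hvar, Real.sqrt_eq_rpow]
        congr 1
        apply integral_congr_ae; filter_upwards with ω
        rw [show ((2:ℝ)) = ((2:ℕ):ℝ) by norm_num, Real.rpow_natCast, sq_abs]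

/-- The exchange identity for an exchangeable pair. -/
theorem aux_exch_key {Ω α : Type*} [MeasurableSpace Ω] [MeasurableSpace α]
    (μ : Measure Ω) [IsProbabilityMeasure μ]
    (X X' : Ω → α) (hX : Measurable X) (hX' : Measurable X')
    (f : α → ℤ) (hf : Measurable f)
    (hexch : μ.map (fun ω => (X ω, X' ω)) = μ.map (fun ω => (X' ω, X ω)))
    (g : ℤ → ℝ) (m : ℤ) :
    ∫ ω, ({ω | f (X' ω) = f (X ω) + m} : Set Ω).indicator (fun _ => (1:ℝ)) ω * g (f (X ω) + m) ∂μ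
    = ∫ ω, ({ω | f (X' ω) = f (X ω) + (-m)} : Set Ω).indicator (fun _ => (1:ℝ)) ω * g (f (X ω)) ∂μ := by
  set φ : α × α → ℝ := fun p => if f p.2 = f p.1 + m then g (f p.2) else 0 with hφ
  have hs : MeasurableSet {p : α × α | f p.2 = f p.1 + m} := by
    have he : {p : α × α | f p.2 = f p.1 + m} = (fun p : α × α => f p.2 - f p.1) ⁻¹' {m} := by
      ext p; simp [sub_eq_iff_eq_add']
    rw [he]
    exact ((hf.comp measurable_snd).sub (hf.comp measurable_fst)) (measurableSet_singleton m)
  have hφm : Measurable φ :=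
    Measurable.ite hs (measurable_from_top.comp (hf.comp measurable_snd)) measurable_const
  have h1 : ∫ ω, φ (X ω, X' ω) ∂μ = ∫ ω, φ (X' ω, X ω) ∂μ := by
    have h2 := congrArg (fun ν : Measure (α × α) => ∫ p, φ p ∂ν) hexch
    simpa only [integral_map (hX.prodMk hX').aemeasurable hφm.aestronglyMeasurable,
      integral_map (hX'.prodMk hX).aemeasurable hφm.aestronglyMeasurable] using h2
  calc ∫ ω, ({ω | f (X' ω) = f (X ω) + m} : Set Ω).indicator (fun _ => (1:ℝ)) ω * g (f (X ω) + m) ∂μ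
      = ∫ ω, φ (X ω, X' ω) ∂μ := by
        apply integral_congr_ae; filter_upwards with ω
        by_cases h : f (X' ω) = f (X ω) + m
        · rw [Set.indicator_of_mem (show ω ∈ {ω | f (X' ω) = f (X ω) + m} from h), one_mul]
          show g (f (X ω) + m) = if f (X' ω) = f (X ω) + m then g (f (X' ω)) else 0
          rw [if_pos h, h]
        · rw [Set.indicator_of_notMem (show ω ∉ {ω | f (X' ω) = f (X ω) + m} from h), zero_mul]
          show (0:ℝ) = if f (X' ω) = f (X ω) + m then g (f (X' ω)) else 0
          rw [if_neg h]
    _ = ∫ ω, φ (X' ω, X ω) ∂μ := h1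
    _ = ∫ ω, ({ω | f (X' ω) = f (X ω) + (-m)} : Set Ω).indicator (fun _ => (1:ℝ)) ω * g (f (X ω)) ∂μ := by
        apply integral_congr_ae; filter_upwards with ω
        show (if f (X ω) = f (X' ω) + m then g (f (X ω)) else 0) = _
        by_cases h : f (X ω) = f (X' ω) + m
        · have h' : f (X' ω) = f (X ω) + (-m) := by omega
          rw [if_pos h, Set.indicator_of_mem (show ω ∈ {ω | f (X' ω) = f (X ω) + (-m)} from h'),
            one_mul]
        · have h' : ¬ (f (X' ω) = f (X ω) + (-m)) := by omega
          rw [if_neg h, Set.indicator_of_notMem (show ω ∉ {ω | f (X' ω) = f (X ω) + (-m)} from h'),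
            zero_mul]

/-- The pull-out property for a `σ(X)`-measurable bounded factor. -/
theorem aux_pullout {Ω α : Type*} [MeasurableSpace Ω] [MeasurableSpace α]
    (μ : Measure Ω) [IsProbabilityMeasure μ]
    (X : Ω → α) (hX : Measurable X)
    (h : Ω → ℝ) (hh : StronglyMeasurable[MeasurableSpace.comap X inferInstance] h)
    (hbd : ∀ ω, |h ω| ≤ 1) (s : Set Ω) (hs : MeasurableSet s) :
    ∫ ω, h ω * (μ[s.indicator (fun _ => (1:ℝ)) | MeasurableSpace.comap X inferInstance]) ω ∂μ
      = ∫ ω, h ω * s.indicator (fun _ => (1:ℝ)) ω ∂μ := by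
  have hmX : MeasurableSpace.comap X inferInstance ≤ _ := hX.comap_le
  have intι : Integrable (s.indicator (fun _ => (1:ℝ))) μ :=
    (integrable_const (1:ℝ)).indicator hs
  have hhm : AEStronglyMeasurable h μ := (hh.mono hmX).aestronglyMeasurable
  have inthι : Integrable (h * s.indicator (fun _ => (1:ℝ))) μ :=
    intι.bdd_mul hhm (Filter.Eventually.of_forall fun ω => by simpa using hbd ω)
  have key := condExp_mul_of_stronglyMeasurable_left (μ := μ) hh inthι intι
  calc ∫ ω, h ω * (μ[s.indicator (fun _ => (1:ℝ)) | MeasurableSpace.comap X inferInstance]) ω ∂μ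
      = ∫ ω, (μ[h * s.indicator (fun _ => (1:ℝ)) | MeasurableSpace.comap X inferInstance]) ω ∂μ :=
        (integral_congr_ae key).symm
    _ = ∫ ω, (h * s.indicator (fun _ => (1:ℝ))) ω ∂μ := integral_condExp hmX
    _ = ∫ ω, h ω * s.indicator (fun _ => (1:ℝ)) ω ∂μ := rfl

/-- Theorem 6 (exchangeable pairs): if `(X,X')` is an exchangeable pair, `W = f(X)`,
`W' = f(X')`, `Q_k = P(W' = W + k | X)` and `q_m = P(W' = W + m) > 0`, then
`D_{1,m}(ℒ(W)) ≤ (√Var Q_m + √Var Q_{−m}) / q_m`. -/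
theorem D1m_le_exchangeable_pair
    {Ω α : Type*} [MeasurableSpace Ω] [MeasurableSpace α]
    (μ : Measure Ω) [IsProbabilityMeasure μ]
    (X X' : Ω → α) (hX : Measurable X) (hX' : Measurable X')
    (hexch : μ.map (fun ω => (X ω, X' ω)) = μ.map (fun ω => (X' ω, X ω)))
    (f : α → ℤ) (hf : Measurable f)
    (Q : ℤ → Ω → ℝ)
    (hQ : ∀ k : ℤ, Q k =
      μ[({ω | f (X' ω) = f (X ω) + k} : Set Ω).indicator (fun _ => (1 : ℝ)) |
        MeasurableSpace.comap X inferInstance])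
    (m : ℕ) (hm : 0 < m)
    (q : ℝ) (hq : q = (μ {ω | f (X' ω) = f (X ω) + m}).toReal) (hq0 : 0 < q) :
    Dnm 1 m (μ.map (fun ω => f (X ω)))
      ≤ (Real.sqrt (variance (Q m) μ) + Real.sqrt (variance (Q (-(m : ℤ))) μ)) / q := by
  have hRHS0 : 0 ≤ (Real.sqrt (variance (Q m) μ) + Real.sqrt (variance (Q (-(m : ℤ))) μ)) / q :=
    div_nonneg (by positivity) hq0.le
  have hmX : MeasurableSpace.comap X inferInstance ≤ _ := hX.comap_le
  have hWm : Measurable (fun ω => f (X ω)) := hf.comp hX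
  have hAm : ∀ k : ℤ, MeasurableSet {ω | f (X' ω) = f (X ω) + k} := by
    intro k
    have he : {ω | f (X' ω) = f (X ω) + k} = (fun ω => f (X' ω) - f (X ω)) ⁻¹' {k} := by
      ext ω; simp [sub_eq_iff_eq_add']
    rw [he]
    exact ((hf.comp hX').sub (hf.comp hX)) (measurableSet_singleton k)
  have intι : ∀ k : ℤ,
      Integrable (({ω | f (X' ω) = f (X ω) + k} : Set Ω).indicator (fun _ => (1:ℝ))) μ :=
    fun k => (integrable_const (1:ℝ)).indicator (hAm k)
  have intQ : ∀ k, Integrable (Q k) μ := by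
    intro k; rw [hQ k]; exact integrable_condExp
  -- a.e. bounds on Q
  have hQbd : ∀ k, ∀ᵐ ω ∂μ, ‖Q k ω‖ ≤ 1 := by
    intro k
    have h0 : 0 ≤ᵐ[μ] Q k := by
      rw [hQ k]
      exact condExp_nonneg (Filter.Eventually.of_forall fun ω =>
        Set.indicator_nonneg (fun _ _ => zero_le_one) ω)
    have h1 : Q k ≤ᵐ[μ] fun _ => (1:ℝ) := by
      rw [hQ k]
      have := condExp_mono (m := MeasurableSpace.comap X inferInstance) (μ := μ) (intι k)
        (integrable_const (1:ℝ))
        (Filter.Eventually.of_forall fun ω => by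
          by_cases h : ω ∈ {ω | f (X' ω) = f (X ω) + k} <;> simp [Set.indicator, h])
      rwa [condExp_const hmX] at this
    filter_upwards [h0, h1] with ω h0 h1
    have h0' : (0:ℝ) ≤ Q k ω := by simpa using h0
    rw [Real.norm_eq_abs, abs_le]
    exact ⟨by linarith, h1⟩
  have hQmem : ∀ k, MemLp (Q k) 2 μ := by
    intro k
    refine MemLp.of_bound ?_ 1 (hQbd k)
    rw [hQ k]
    exact (stronglyMeasurable_condExp.mono hmX).aestronglyMeasurable
  -- means of Q
  have hintι_m :
      ∫ ω, ({ω | f (X' ω) = f (X ω) + (m:ℤ)} : Set Ω).indicator (fun _ => (1:ℝ)) ω ∂μ = q := by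
    rw [integral_indicator_const (1:ℝ) (hAm (m:ℤ))]
    simp [hq, Measure.real]
  have hιswap :
      ∫ ω, ({ω | f (X' ω) = f (X ω) + (m:ℤ)} : Set Ω).indicator (fun _ => (1:ℝ)) ω ∂μ
      = ∫ ω, ({ω | f (X' ω) = f (X ω) + (-(m:ℤ))} : Set Ω).indicator (fun _ => (1:ℝ)) ω ∂μ := by
    have := aux_exch_key μ X X' hX hX' f hf hexch (fun _ => (1:ℝ)) m
    simpa using this
  have hEQm : ∫ ω, Q (m:ℤ) ω ∂μ = q := by
    rw [hQ (m:ℤ), integral_condExp hmX, hintι_m]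
  have hEQn : ∫ ω, Q (-(m:ℤ)) ω ∂μ = q := by
    rw [hQ (-(m:ℤ)), integral_condExp hmX, ← hιswap, hintι_m]
  -- variance bounds
  have hdev_m : ∫ ω, |q - Q (m:ℤ) ω| ∂μ ≤ Real.sqrt (variance (Q (m:ℤ)) μ) := by
    have h := aux_absdev_le_sqrt_variance μ (hQmem (m:ℤ)) hEQm.symm
    calc ∫ ω, |q - Q (m:ℤ) ω| ∂μ = ∫ ω, |Q (m:ℤ) ω - q| ∂μ := by
          simp only [abs_sub_comm]
      _ ≤ _ := h
  have hdev_n : ∫ ω, |q - Q (-(m:ℤ)) ω| ∂μ ≤ Real.sqrt (variance (Q (-(m:ℤ))) μ) := by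
    have h := aux_absdev_le_sqrt_variance μ (hQmem (-(m:ℤ))) hEQn.symm
    calc ∫ ω, |q - Q (-(m:ℤ)) ω| ∂μ = ∫ ω, |Q (-(m:ℤ)) ω - q| ∂μ := by
          simp only [abs_sub_comm]
      _ ≤ _ := h
  -- main bound for each test function g
  refine Real.sSup_le ?_ hRHS0
  rintro x ⟨g, hg, rfl⟩
  have hXmX : Measurable[MeasurableSpace.comap X inferInstance] X :=
    measurable_iff_comap_le.mpr le_rfl
  have hgmeas : ∀ c : ℤ,
      Measurable[MeasurableSpace.comap X inferInstance] (fun ω => g (f (X ω) + c)) :=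
    fun c => measurable_from_top.comp ((hf.comp hXmX).add_const c)
  have hgmeas0 : ∀ c : ℤ, Measurable (fun ω => g (f (X ω) + c)) :=
    fun c => measurable_from_top.comp (hWm.add_const c)
  have intg : ∀ c : ℤ, Integrable (fun ω => g (f (X ω) + c)) μ := fun c =>
    (integrable_const (1:ℝ)).mono' (hgmeas0 c).aestronglyMeasurable
      (Filter.Eventually.of_forall fun ω => by simpa using hg (f (X ω) + c))
  have intgQ : ∀ c k : ℤ, Integrable (fun ω => g (f (X ω) + c) * Q k ω) μ := fun c k =>
    (intQ k).bdd_mul (hgmeas0 c).aestronglyMeasurable (Filter.Eventually.of_forall fun ω => by simpa using hg (f (X ω) + c))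
  have intgqQ : ∀ c k : ℤ, Integrable (fun ω => g (f (X ω) + c) * (q - Q k ω)) μ := fun c k =>
    ((integrable_const q).sub (intQ k)).bdd_mul (hgmeas0 c).aestronglyMeasurable
      (Filter.Eventually.of_forall fun ω => by simpa using hg (f (X ω) + c))
  -- the key identity E[g(W+m) Q_m] = E[g(W) Q_{-m}]
  have e1 : ∫ ω, g (f (X ω) + m) * Q (m:ℤ) ω ∂μ = ∫ ω, g (f (X ω)) * Q (-(m:ℤ)) ω ∂μ := by
    have p1 := aux_pullout μ X hX (fun ω => g (f (X ω) + m)) (hgmeas (m:ℤ)).stronglyMeasurable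
      (fun ω => hg _) {ω | f (X' ω) = f (X ω) + (m:ℤ)} (hAm (m:ℤ))
    have p2 := aux_pullout μ X hX (fun ω => g (f (X ω) + 0)) (hgmeas 0).stronglyMeasurable
      (fun ω => hg _) {ω | f (X' ω) = f (X ω) + (-(m:ℤ))} (hAm (-(m:ℤ)))
    simp only [add_zero] at p2
    have ex := aux_exch_key μ X X' hX hX' f hf hexch g m
    rw [hQ (m:ℤ), hQ (-(m:ℤ))]
    calc ∫ ω, g (f (X ω) + m) *
            (μ[({ω | f (X' ω) = f (X ω) + (m:ℤ)} : Set Ω).indicator (fun _ => (1:ℝ)) |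
              MeasurableSpace.comap X inferInstance]) ω ∂μ
        = ∫ ω, g (f (X ω) + m) *
            ({ω | f (X' ω) = f (X ω) + (m:ℤ)} : Set Ω).indicator (fun _ => (1:ℝ)) ω ∂μ := p1
      _ = ∫ ω, ({ω | f (X' ω) = f (X ω) + (m:ℤ)} : Set Ω).indicator (fun _ => (1:ℝ)) ω *
            g (f (X ω) + m) ∂μ := by simp only [mul_comm]
      _ = ∫ ω, ({ω | f (X' ω) = f (X ω) + (-(m:ℤ))} : Set Ω).indicator (fun _ => (1:ℝ)) ω *
            g (f (X ω)) ∂μ := ex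
      _ = ∫ ω, g (f (X ω)) *
            ({ω | f (X' ω) = f (X ω) + (-(m:ℤ))} : Set Ω).indicator (fun _ => (1:ℝ)) ω ∂μ := by
            simp only [mul_comm]
      _ = ∫ ω, g (f (X ω)) *
            (μ[({ω | f (X' ω) = f (X ω) + (-(m:ℤ))} : Set Ω).indicator (fun _ => (1:ℝ)) |
              MeasurableSpace.comap X inferInstance]) ω ∂μ := p2.symm
  -- the central decomposition
  have s1 : ∫ ω, g (f (X ω) + m) * (q - Q (m:ℤ) ω) ∂μ
      = q * ∫ ω, g (f (X ω) + m) ∂μ - ∫ ω, g (f (X ω) + m) * Q (m:ℤ) ω ∂μ := by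
    have h1 : (fun ω => g (f (X ω) + m) * (q - Q (m:ℤ) ω))
        = fun ω => g (f (X ω) + m) * q - g (f (X ω) + m) * Q (m:ℤ) ω := by
      funext ω; ring
    rw [h1, integral_sub ((intg (m:ℤ)).mul_const q) (intgQ (m:ℤ) (m:ℤ)),
      integral_mul_const, mul_comm]
  have s0 : ∫ ω, g (f (X ω)) * (q - Q (-(m:ℤ)) ω) ∂μ
      = q * ∫ ω, g (f (X ω)) ∂μ - ∫ ω, g (f (X ω)) * Q (-(m:ℤ)) ω ∂μ := by
    have h1 : (fun ω => g (f (X ω)) * (q - Q (-(m:ℤ)) ω))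
        = fun ω => g (f (X ω) + 0) * q - g (f (X ω) + 0) * Q (-(m:ℤ)) ω := by
      funext ω; rw [add_zero]; ring
    rw [h1, integral_sub ((intg 0).mul_const q) (intgQ 0 (-(m:ℤ))),
      integral_mul_const, mul_comm]
    simp
  have central : q * (∫ ω, g (f (X ω) + m) ∂μ - ∫ ω, g (f (X ω)) ∂μ)
      = ∫ ω, g (f (X ω) + m) * (q - Q (m:ℤ) ω) ∂μ
        - ∫ ω, g (f (X ω)) * (q - Q (-(m:ℤ)) ω) ∂μ := by
    rw [s1, s0, e1]; ring
  -- rewrite the integral over the pushforward measure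
  have hmap : ∫ i, (fd m)^[1] g i ∂(μ.map (fun ω => f (X ω)))
      = ∫ ω, g (f (X ω) + m) ∂μ - ∫ ω, g (f (X ω)) ∂μ := by
    rw [Function.iterate_one]
    rw [integral_map hWm.aemeasurable (measurable_from_top (f := fd m g)).aestronglyMeasurable]
    show ∫ ω, (g (f (X ω) + m) - g (f (X ω))) ∂μ = _
    refine integral_sub (intg (m:ℤ)) ?_
    have := intg 0
    simpa using this
  -- putting it together
  rw [hmap, le_div_iff₀ hq0]
  have habs : |∫ ω, g (f (X ω) + m) ∂μ - ∫ ω, g (f (X ω)) ∂μ| * q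
      = |q * (∫ ω, g (f (X ω) + m) ∂μ - ∫ ω, g (f (X ω)) ∂μ)| := by
    rw [abs_mul, abs_of_pos hq0, mul_comm]
  rw [habs, central]
  have b1 : |∫ ω, g (f (X ω) + m) * (q - Q (m:ℤ) ω) ∂μ| ≤ ∫ ω, |q - Q (m:ℤ) ω| ∂μ := by
    have hn := norm_integral_le_integral_norm (μ := μ)
      (f := fun ω => g (f (X ω) + m) * (q - Q (m:ℤ) ω))
    simp only [Real.norm_eq_abs] at hn
    refine hn.trans ?_
    refine integral_mono (intgqQ (m:ℤ) (m:ℤ)).abs ((integrable_const q).sub (intQ (m:ℤ))).abs ?_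
    intro ω
    dsimp only
    rw [abs_mul]
    exact mul_le_of_le_one_left (abs_nonneg _) (hg _)
  have b0 : |∫ ω, g (f (X ω)) * (q - Q (-(m:ℤ)) ω) ∂μ| ≤ ∫ ω, |q - Q (-(m:ℤ)) ω| ∂μ := by
    have hn := norm_integral_le_integral_norm (μ := μ)
      (f := fun ω => g (f (X ω)) * (q - Q (-(m:ℤ)) ω))
    simp only [Real.norm_eq_abs] at hn
    refine hn.trans ?_
    have h1 : (fun ω => |g (f (X ω)) * (q - Q (-(m:ℤ)) ω)|)
        = fun ω => |g (f (X ω) + 0) * (q - Q (-(m:ℤ)) ω)| := by simp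
    refine integral_mono (by rw [h1]; exact (intgqQ 0 (-(m:ℤ))).abs)
      ((integrable_const q).sub (intQ (-(m:ℤ)))).abs ?_
    intro ω
    dsimp only
    rw [abs_mul]
    exact mul_le_of_le_one_left (abs_nonneg _) (hg _)
  calc |∫ ω, g (f (X ω) + m) * (q - Q (m:ℤ) ω) ∂μ
          - ∫ ω, g (f (X ω)) * (q - Q (-(m:ℤ)) ω) ∂μ|
      ≤ |∫ ω, g (f (X ω) + m) * (q - Q (m:ℤ) ω) ∂μ|
          + |∫ ω, g (f (X ω)) * (q - Q (-(m:ℤ)) ω) ∂μ| := abs_sub _ _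
    _ ≤ ∫ ω, |q - Q (m:ℤ) ω| ∂μ + ∫ ω, |q - Q (-(m:ℤ)) ω| ∂μ := add_le_add b1 b0
    _ ≤ Real.sqrt (variance (Q m) μ) + Real.sqrt (variance (Q (-(m:ℤ))) μ) :=
        add_le_add hdev_m hdev_n
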